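/- (Glaisher's congruence) Let f : ℕ → ℕ be zero almost everywhere (i.e., there is N with f(s) = 0 for all s > N), let m ≥ 1, and for k, r ∈ ℕ define S(k, r) = ∑ binom(k,n)_f, the sum over all n ≥ 0 with n ≡ r (mod m). Then for every prime p with p ≡ 1 (mod m) and every k ≥ 1, S(k + p − 1, r) ≡ S(k, r) (mod p). -/

import Mathlib

/-- The extended binomial coefficient `binom(k,n)_f`: the sum, over all
`k`-tuples `(π₁,…,π_k)` of nonnegative integers with `π₁ + ⋯ + π_k = n`,
of the products `f(π₁)⋯f(π_k)`. It counts the `f`-weighted integer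
compositions of `n` with exactly `k` parts. -/
def extBinom (f : ℕ → ℕ) (k n : ℕ) : ℕ :=
  ∑ π ∈ Finset.Nat.antidiagonalTuple k n, ∏ i, f (π i)

open Finset Polynomial

lemma extBinom_zero (f : ℕ → ℕ) (n : ℕ) : extBinom f 0 n = if n = 0 then 1 else 0 := by
  cases n with
  | zero => simp [extBinom, Finset.Nat.antidiagonalTuple_zero_zero]
  | succ n => simp [extBinom, Finset.Nat.antidiagonalTuple_zero_succ]

lemma extBinom_one (f : ℕ → ℕ) (n : ℕ) : extBinom f 1 n = f n := by
  simp [extBinom, Finset.Nat.antidiagonalTuple_one]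

lemma extBinom_succ (f : ℕ → ℕ) (k n : ℕ) :
    extBinom f (k + 1) n = ∑ uv ∈ Finset.HasAntidiagonal.antidiagonal n, f uv.1 * extBinom f k uv.2 := by
  unfold extBinom
  simp only [Finset.mul_sum]
  rw [Finset.sum_sigma']
  refine (Finset.sum_nbij'
    (i := fun (x : Σ _ : ℕ × ℕ, Fin k → ℕ) => Fin.cons x.1.1 x.2)
    (j := fun (τ : Fin (k + 1) → ℕ) => (⟨(τ 0, ∑ i : Fin k, τ (Fin.succ i)), Fin.tail τ⟩ : Σ _ : ℕ × ℕ, Fin k → ℕ))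
    ?_ ?_ ?_ ?_ ?_).symm
  · rintro ⟨⟨u, v⟩, σ⟩ hx
    simp only [Finset.mem_sigma, Finset.HasAntidiagonal.mem_antidiagonal,
      Finset.Nat.mem_antidiagonalTuple] at hx ⊢
    rw [Fin.sum_cons, hx.2, hx.1]
  · intro τ hτ
    simp only [Finset.Nat.mem_antidiagonalTuple] at hτ
    simp only [Finset.mem_sigma, Finset.HasAntidiagonal.mem_antidiagonal,
      Finset.Nat.mem_antidiagonalTuple]
    constructor
    · rw [← hτ, Fin.sum_univ_succ]
    · rfl
  · rintro ⟨⟨u, v⟩, σ⟩ hx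
    simp only [Finset.mem_sigma, Finset.HasAntidiagonal.mem_antidiagonal,
      Finset.Nat.mem_antidiagonalTuple] at hx
    have hs : (∑ i : Fin k, (Fin.cons u σ : Fin (k + 1) → ℕ) (Fin.succ i)) = v := by
      simp only [Fin.cons_succ]; exact hx.2
    simp only [Fin.cons_zero, Fin.tail_cons, hs]
  · intro τ _
    simp [Fin.cons_self_tail]
  · rintro ⟨⟨u, v⟩, σ⟩ hx
    rw [Fin.prod_univ_succ]
    simp [Fin.cons_zero, Fin.cons_succ]

/-- The generating polynomial of `f` truncated at `N`. -/
noncomputable def genPoly (f : ℕ → ℕ) (N : ℕ) : Polynomial ℕ :=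
  ∑ s ∈ Finset.range (N + 1), Polynomial.monomial s (f s)

lemma genPoly_coeff {f : ℕ → ℕ} {N : ℕ} (hN : ∀ s > N, f s = 0) (a : ℕ) :
    (genPoly f N).coeff a = f a := by
  rw [genPoly, Polynomial.finset_sum_coeff]
  simp only [Polynomial.coeff_monomial]
  rw [Finset.sum_ite_eq' (Finset.range (N + 1)) a f]
  by_cases h : a ∈ Finset.range (N + 1)
  · rw [if_pos h]
  · rw [if_neg h]
    exact (hN a (by simpa using h)).symm

lemma genPoly_pow_coeff {f : ℕ → ℕ} {N : ℕ} (hN : ∀ s > N, f s = 0) (k n : ℕ) :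
    ((genPoly f N) ^ k).coeff n = extBinom f k n := by
  induction k generalizing n with
  | zero => simp [extBinom_zero, Polynomial.coeff_one, eq_comm]
  | succ k ih =>
    rw [pow_succ', Polynomial.coeff_mul, extBinom_succ]
    exact Finset.sum_congr rfl fun uv _ => by rw [genPoly_coeff hN, ih]

lemma extBinom_add {f : ℕ → ℕ} {N : ℕ} (hN : ∀ s > N, f s = 0) (a b n : ℕ) :
    extBinom f (a + b) n =
      ∑ uv ∈ Finset.HasAntidiagonal.antidiagonal n, extBinom f a uv.1 * extBinom f b uv.2 := by
  rw [← genPoly_pow_coeff hN, pow_add, Polynomial.coeff_mul]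
  exact Finset.sum_congr rfl fun uv _ => by rw [genPoly_pow_coeff hN, genPoly_pow_coeff hN]

lemma extBinom_eq_zero {f : ℕ → ℕ} {N : ℕ} (hN : ∀ s > N, f s = 0) {k n : ℕ}
    (h : k * N < n) : extBinom f k n = 0 := by
  rw [← genPoly_pow_coeff hN]
  apply Polynomial.coeff_eq_zero_of_natDegree_lt
  calc ((genPoly f N) ^ k).natDegree ≤ k * (genPoly f N).natDegree :=
        Polynomial.natDegree_pow_le
    _ ≤ k * N := by
        refine Nat.mul_le_mul_left _ ?_
        refine Polynomial.natDegree_sum_le_of_forall_le _ _ ?_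
        intro i hi
        have hiN : i ≤ N := Nat.lt_succ_iff.mp (Finset.mem_range.mp hi)
        exact (Polynomial.natDegree_monomial_le _).trans hiN
    _ < n := h

/-- Frobenius/Fermat key congruence: `extBinom f p n ≡ [p ∣ n] f(n/p) mod p`. -/
lemma extBinom_prime_cast {f : ℕ → ℕ} {N : ℕ} (hN : ∀ s > N, f s = 0)
    {p : ℕ} (hp : p.Prime) (n : ℕ) :
    ((extBinom f p n : ℕ) : ZMod p) = if p ∣ n then ((f (n / p) : ℕ) : ZMod p) else 0 := by
  haveI := Fact.mk hp
  set Fp : Polynomial (ZMod p) := (genPoly f N).map (Nat.castRingHom (ZMod p)) with hFp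
  have hc : ∀ a, Fp.coeff a = ((f a : ℕ) : ZMod p) := by
    intro a
    rw [hFp, Polynomial.coeff_map, genPoly_coeff hN]
    rfl
  have h1 : ((extBinom f p n : ℕ) : ZMod p) = (Fp ^ p).coeff n := by
    rw [hFp, ← Polynomial.map_pow, Polynomial.coeff_map, genPoly_pow_coeff hN]
    rfl
  have h2 : Fp ^ p = Polynomial.expand (ZMod p) p Fp := by
    rw [← Polynomial.map_frobenius_expand p Fp, ZMod.frobenius_zmod, Polynomial.map_id]
  rw [h1, h2, Polynomial.coeff_expand hp.pos]
  split <;> simp [hc]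

/-- Reduce a residue-filtered sum of antidiagonal sums to a sum over a product box. -/
lemma sum_filter_antidiag_eq {M : Type*} [CommSemiring M] (g h : ℕ → M)
    (U V D m r : ℕ) (hg : ∀ u > U, g u = 0) (hh : ∀ v > V, h v = 0) (hD : U + V < D) :
    (∑ n ∈ (Finset.range D).filter (fun n => n % m = r % m),
        ∑ uv ∈ Finset.HasAntidiagonal.antidiagonal n, g uv.1 * h uv.2)
      = ∑ uv ∈ ((Finset.range (U + 1)) ×ˢ (Finset.range (V + 1))).filter
          (fun uv => (uv.1 + uv.2) % m = r % m), g uv.1 * h uv.2 := by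
  have hstep : (∑ n ∈ (Finset.range D).filter (fun n => n % m = r % m),
        ∑ uv ∈ Finset.HasAntidiagonal.antidiagonal n, g uv.1 * h uv.2)
      = ∑ uv ∈ ((Finset.range D) ×ˢ (Finset.range D)).filter
          (fun uv => uv.1 + uv.2 < D ∧ (uv.1 + uv.2) % m = r % m), g uv.1 * h uv.2 := by
    rw [Finset.sum_sigma']
    refine Finset.sum_nbij'
      (i := fun (x : Σ _ : ℕ, ℕ × ℕ) => x.2)
      (j := fun (uv : ℕ × ℕ) => ⟨uv.1 + uv.2, uv⟩) ?_ ?_ ?_ ?_ ?_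
    · rintro ⟨n, u, v⟩ hx
      simp only [Finset.mem_sigma, Finset.mem_filter, Finset.mem_range,
        Finset.HasAntidiagonal.mem_antidiagonal, Finset.mem_product] at hx ⊢
      obtain ⟨⟨hn, hr⟩, huv⟩ := hx
      refine ⟨⟨by omega, by omega⟩, by omega, by rwa [huv]⟩
    · rintro ⟨u, v⟩ huv
      simp only [Finset.mem_filter, Finset.mem_product, Finset.mem_range,
        Finset.mem_sigma, Finset.HasAntidiagonal.mem_antidiagonal] at huv ⊢
      exact ⟨⟨huv.2.1, huv.2.2⟩, trivial⟩
    · rintro ⟨n, u, v⟩ hx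
      simp only [Finset.mem_sigma, Finset.mem_filter, Finset.mem_range,
        Finset.HasAntidiagonal.mem_antidiagonal] at hx
      exact Sigma.ext (by simpa using hx.2) (by simp)
    · rintro ⟨u, v⟩ _; rfl
    · rintro ⟨n, u, v⟩ _; rfl
  rw [hstep]
  have hsub1 : ((Finset.range D) ×ˢ (Finset.range D)).filter
      (fun uv => uv.1 + uv.2 < D ∧ (uv.1 + uv.2) % m = r % m)
      ⊆ ((Finset.range D) ×ˢ (Finset.range D)).filter
      (fun uv => (uv.1 + uv.2) % m = r % m) := by
    intro uv huv
    simp only [Finset.mem_filter] at huv ⊢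
    exact ⟨huv.1, huv.2.2⟩
  have hz1 : ∀ uv ∈ ((Finset.range D) ×ˢ (Finset.range D)).filter
      (fun uv => (uv.1 + uv.2) % m = r % m),
      uv ∉ ((Finset.range D) ×ˢ (Finset.range D)).filter
      (fun uv => uv.1 + uv.2 < D ∧ (uv.1 + uv.2) % m = r % m) → g uv.1 * h uv.2 = 0 := by
    intro uv hin hout
    simp only [Finset.mem_filter, Finset.mem_product, Finset.mem_range] at hin hout
    have hge : D ≤ uv.1 + uv.2 := by
      by_contra hcon
      push_neg at hcon
      exact hout ⟨hin.1, hcon, hin.2⟩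
    have : U < uv.1 ∨ V < uv.2 := by omega
    rcases this with h' | h'
    · rw [hg _ h', zero_mul]
    · rw [hh _ h', mul_zero]
  have hsub2 : ((Finset.range (U + 1)) ×ˢ (Finset.range (V + 1))).filter
      (fun uv => (uv.1 + uv.2) % m = r % m)
      ⊆ ((Finset.range D) ×ˢ (Finset.range D)).filter
      (fun uv => (uv.1 + uv.2) % m = r % m) := by
    intro uv huv
    simp only [Finset.mem_filter, Finset.mem_product, Finset.mem_range] at huv ⊢
    exact ⟨⟨by omega, by omega⟩, huv.2⟩
  have hz2 : ∀ uv ∈ ((Finset.range D) ×ˢ (Finset.range D)).filter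
      (fun uv => (uv.1 + uv.2) % m = r % m),
      uv ∉ ((Finset.range (U + 1)) ×ˢ (Finset.range (V + 1))).filter
      (fun uv => (uv.1 + uv.2) % m = r % m) → g uv.1 * h uv.2 = 0 := by
    intro uv hin hout
    simp only [Finset.mem_filter, Finset.mem_product, Finset.mem_range] at hin hout
    have : U < uv.1 ∨ V < uv.2 := by
      by_contra hcon
      push_neg at hcon
      exact hout ⟨⟨by omega, by omega⟩, hin.2⟩
    rcases this with h' | h'
    · rw [hg _ h', zero_mul]
    · rw [hh _ h', mul_zero]
  rw [Finset.sum_subset hsub1 hz1]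
  exact (Finset.sum_subset hsub2 hz2).symm

theorem extBinom_glaisher (f : ℕ → ℕ) (hf : ∃ N, ∀ s > N, f s = 0)
    (m : ℕ) (hm : 1 ≤ m) (r : ℕ)
    (p : ℕ) (hp : p.Prime) (hpm : p ≡ 1 [MOD m]) (k : ℕ) (hk : 1 ≤ k) :
    (∑ᶠ n ∈ {n : ℕ | n ≡ r [MOD m]}, extBinom f (k + p - 1) n) ≡
      (∑ᶠ n ∈ {n : ℕ | n ≡ r [MOD m]}, extBinom f k n) [MOD p] := by
  obtain ⟨N, hN⟩ := hf
  obtain ⟨j, rfl⟩ : ∃ j, k = j + 1 := ⟨k - 1, (Nat.succ_pred_eq_of_pos hk).symm⟩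
  haveI := Fact.mk hp
  have hp1 : 1 ≤ p := hp.one_lt.le
  have hkp : j + 1 + p - 1 = j + p := by omega
  rw [hkp]
  set D := (j + p) * N + 1 with hD
  -- convert finsums to finite sums
  have hfin : ∀ K, K ≤ j + p →
      (∑ᶠ n ∈ {n : ℕ | n ≡ r [MOD m]}, extBinom f K n)
        = ∑ n ∈ (Finset.range D).filter (fun n => n % m = r % m), extBinom f K n := by
    intro K hK
    apply finsum_mem_eq_sum_of_subset
    · rintro x ⟨hx1, hx2⟩
      simp only [Finset.coe_filter, Finset.mem_range, Set.mem_setOf_eq]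
      refine ⟨?_, hx1⟩
      by_contra hcon
      push_neg at hcon
      apply hx2
      apply extBinom_eq_zero hN
      calc K * N ≤ (j + p) * N := Nat.mul_le_mul_right N hK
        _ < D := by omega
        _ ≤ x := hcon
    · intro x hx
      simp only [Finset.coe_filter, Finset.mem_range, Set.mem_setOf_eq] at hx
      exact hx.2
  rw [hfin _ le_rfl, hfin (j + 1) (by omega)]
  refine (ZMod.natCast_eq_natCast_iff _ _ _).mp ?_
  push_cast
  -- rewrite both sides via extBinom_add
  have e1 : ∀ n, ((extBinom f (j + p) n : ℕ) : ZMod p)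
      = ∑ uv ∈ Finset.HasAntidiagonal.antidiagonal n, ((extBinom f j uv.1 : ℕ) : ZMod p) *
          (if p ∣ uv.2 then ((f (uv.2 / p) : ℕ) : ZMod p) else 0) := by
    intro n
    rw [extBinom_add hN]
    push_cast
    exact Finset.sum_congr rfl fun uv _ => by rw [extBinom_prime_cast hN hp]
  have e2 : ∀ n, ((extBinom f (j + 1) n : ℕ) : ZMod p)
      = ∑ uv ∈ Finset.HasAntidiagonal.antidiagonal n, ((extBinom f j uv.1 : ℕ) : ZMod p) *
          ((f uv.2 : ℕ) : ZMod p) := by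
    intro n
    rw [extBinom_add hN]
    push_cast
    exact Finset.sum_congr rfl fun uv _ => by rw [extBinom_one]
  simp only [e1, e2]
  -- support bounds
  have hg : ∀ u > j * N, ((extBinom f j u : ℕ) : ZMod p) = 0 := by
    intro u hu; rw [extBinom_eq_zero hN hu, Nat.cast_zero]
  have hh1 : ∀ v > p * N, (if p ∣ v then ((f (v / p) : ℕ) : ZMod p) else 0) = 0 := by
    intro v hv
    split
    · rename_i hdvd
      have : N < v / p := by
        rcases hdvd with ⟨c, rfl⟩
        rw [Nat.mul_div_cancel_left c hp.pos]
        exact lt_of_mul_lt_mul_left hv (Nat.zero_le p)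
      rw [hN _ this, Nat.cast_zero]
    · rfl
  have hh2 : ∀ v > N, ((f v : ℕ) : ZMod p) = 0 := by
    intro v hv; rw [hN v hv, Nat.cast_zero]
  rw [sum_filter_antidiag_eq _ _ (j * N) (p * N) D m r hg hh1 (by rw [hD]; nlinarith),
    sum_filter_antidiag_eq _ _ (j * N) N D m r hg hh2 (by rw [hD]; nlinarith)]
  -- now reindex the left box sum via v = p * c
  have hsplit : (∑ uv ∈ ((Finset.range (j * N + 1)) ×ˢ (Finset.range (p * N + 1))).filter
        (fun uv => (uv.1 + uv.2) % m = r % m),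
        ((extBinom f j uv.1 : ℕ) : ZMod p) *
          (if p ∣ uv.2 then ((f (uv.2 / p) : ℕ) : ZMod p) else 0))
      = ∑ uv ∈ (((Finset.range (j * N + 1)) ×ˢ (Finset.range (p * N + 1))).filter
        (fun uv => (uv.1 + uv.2) % m = r % m)).filter (fun uv => p ∣ uv.2),
        ((extBinom f j uv.1 : ℕ) : ZMod p) * ((f (uv.2 / p) : ℕ) : ZMod p) := by
    conv_rhs => rw [Finset.sum_filter]
    exact Finset.sum_congr rfl fun uv _ => by rw [mul_ite, mul_zero]
  rw [hsplit]
  refine Finset.sum_nbij'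
    (i := fun uv => (uv.1, uv.2 / p))
    (j := fun uv => (uv.1, p * uv.2)) ?_ ?_ ?_ ?_ ?_
  · rintro ⟨u, v⟩ huv
    simp only [Finset.mem_filter, Finset.mem_product, Finset.mem_range] at huv ⊢
    obtain ⟨⟨⟨hu, hv⟩, hr⟩, hdvd⟩ := huv
    have hvp : v / p ≤ N := by
      rcases hdvd with ⟨c, rfl⟩
      rw [Nat.mul_div_cancel_left c hp.pos]
      exact le_of_mul_le_mul_left (by omega) hp.pos
    refine ⟨⟨hu, by omega⟩, ?_⟩
    -- residue: u + v/p ≡ u + v ≡ r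
    have hmod : p * (v / p) ≡ 1 * (v / p) [MOD m] := Nat.ModEq.mul_right _ hpm
    have hveq : p * (v / p) = v := Nat.mul_div_cancel' hdvd
    have : (u + v / p) % m = (u + v) % m := by
      conv_rhs => rw [← hveq]
      have := (Nat.ModEq.add_left u hmod).symm
      simpa [Nat.ModEq, one_mul] using this
    rw [this]; exact hr
  · rintro ⟨u, c⟩ huv
    simp only [Finset.mem_filter, Finset.mem_product, Finset.mem_range] at huv ⊢
    obtain ⟨⟨hu, hc⟩, hr⟩ := huv
    refine ⟨⟨⟨hu, by nlinarith⟩, ?_⟩, Dvd.intro c rfl⟩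
    have hmod : p * c ≡ 1 * c [MOD m] := Nat.ModEq.mul_right _ hpm
    have : (u + p * c) % m = (u + c) % m := by
      have := Nat.ModEq.add_left u hmod
      simpa [Nat.ModEq, one_mul] using this
    rw [this]; exact hr
  · rintro ⟨u, v⟩ huv
    simp only [Finset.mem_filter] at huv
    have : p * (v / p) = v := Nat.mul_div_cancel' huv.2
    simp [this]
  · rintro ⟨u, c⟩ _
    simp [Nat.mul_div_cancel_left c hp.pos]
  · rintro ⟨u, v⟩ _
    rfl
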